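/- arXiv:1610.03044 — 3 statements merged into one kernel-verified Lean document; each statement's English description precedes it below -/
import Mathlib

section
/- For every E₀ > 0 and A > 0 there exists M > 0 such that: for all ε ∈ (0, E₀] and a ∈ [0, A], every C² solution u of ε² u''(x) + μ(x) u(x) − u(x)³ + ε a f(x) = 0 on ℝ with u(x) → 0 as x → +∞ and as x → −∞ satisfies |u(x)| ≤ M for all x ∈ ℝ. -/
open MeasureTheory Filter Topology Set

/-- The energy functional `E_{ε,a}`. -/
noncomputable def energy (μ f : ℝ → ℝ) (ε a : ℝ) (u : ℝ → ℝ) : ℝ :=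
  ∫ x : ℝ, (ε / 2 * (deriv u x) ^ 2 - 1 / (2 * ε) * μ x * (u x) ^ 2
    + 1 / (4 * ε) * (u x) ^ 4 - a * f x * u x)

/-- Membership in `H¹(ℝ)`: differentiable with `u, u' ∈ L²(ℝ)`. -/
def InH1 (u : ℝ → ℝ) : Prop :=
  Differentiable ℝ u ∧ MeasureTheory.MemLp u 2 ∧ MeasureTheory.MemLp (deriv u) 2

/-- Standing hypotheses on `μ` and `f`. -/
structure Hyp (μ f : ℝ → ℝ) (ξ : ℝ) : Prop where
  μ_C1 : ContDiff ℝ 1 μ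
  μ_bdd : ∃ M, ∀ x, |μ x| ≤ M
  μ_even : ∀ x, μ (-x) = μ x
  μ_deriv_neg : ∀ x, 0 < x → deriv μ x < 0
  ξ_pos : 0 < ξ
  μ_ξ : μ ξ = 0
  ξ_unique : ∀ x, 0 < x → μ x = 0 → x = ξ
  f_cont : Continuous f
  f_odd : ∀ x, f (-x) = -f x
  f_int : MeasureTheory.Integrable f
  f_bdd : ∃ M, ∀ x, |f x| ≤ M
  f_pos : ∀ x, 0 < x → 0 < f x

/-- `v` is a global minimizer of `E_{ε,a}` over `H¹(ℝ)`. -/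
def IsMinimizer (μ f : ℝ → ℝ) (ε a : ℝ) (v : ℝ → ℝ) : Prop :=
  InH1 v ∧ ∀ u : ℝ → ℝ, InH1 u → energy μ f ε a v ≤ energy μ f ε a u


lemma secderiv_nonpos_of_max (u : ℝ → ℝ) (hu : ContDiff ℝ 2 u) (c : ℝ)
    (hmax : ∀ y, u y ≤ u c) : deriv (deriv u) c ≤ 0 := by
  by_contra hpos
  push_neg at hpos
  have hdu : Differentiable ℝ u := hu.differentiable two_ne_zero
  have hdu' : Differentiable ℝ (deriv u) := by
    have h2 : ContDiff ℝ ((1:WithTop ℕ∞) + 1) u := by exact_mod_cast hu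
    exact (contDiff_succ_iff_deriv.mp h2).2.2.differentiable one_ne_zero
  have h0 : deriv u c = 0 :=
    (IsLocalMax.deriv_eq_zero (Filter.Eventually.of_forall hmax))
  have hd : HasDerivAt (deriv u) (deriv (deriv u) c) c := (hdu' c).hasDerivAt
  have hslope := hasDerivAt_iff_tendsto_slope.mp hd
  have hev : ∀ᶠ y in 𝓝[≠] c, 0 < slope (deriv u) c y :=
    hslope.eventually (eventually_gt_nhds hpos)
  obtain ⟨δ, hδ, hball⟩ := Metric.mem_nhdsWithin_iff.mp hev
  have hneg : ∀ y ∈ Ioo (c - δ) c, deriv u y < 0 := by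
    intro y hy
    have hyne : y ≠ c := ne_of_lt hy.2
    have hdist : dist y c < δ := by
      rw [Real.dist_eq, abs_of_nonpos (by linarith [hy.1, hy.2])]
      linarith [hy.1]
    have hs : 0 < slope (deriv u) c y := hball ⟨Metric.mem_ball.mpr hdist, by simpa using hyne⟩
    rw [slope_def_field, h0, sub_zero] at hs
    have hyc : y - c < 0 := by linarith [hy.2]
    have : deriv u y / (y - c) * (y - c) = deriv u y :=
      div_mul_cancel₀ _ (ne_of_lt hyc)
    nlinarith [mul_neg_of_pos_of_neg hs hyc]
  have hanti : StrictAntiOn u (Icc (c - δ) c) := by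
    apply strictAntiOn_of_deriv_neg (convex_Icc _ _) hdu.continuous.continuousOn
    intro y hy
    rw [interior_Icc] at hy
    exact hneg y hy
  have h1 : u c < u (c - δ / 2) := by
    apply hanti ⟨by linarith, by linarith⟩ ⟨by linarith, le_refl c⟩ (by linarith)
  exact absurd (hmax (c - δ / 2)) (not_le.mpr h1)


/-- Uniform bound: solutions of the Euler–Lagrange equation tending to `0` at `±∞` are
uniformly bounded for `ε ∈ (0, E₀]` and `a ∈ [0, A]`. -/
theorem stmt10 (μ f : ℝ → ℝ) (ξ : ℝ) (h : Hyp μ f ξ)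
    (E₀ A : ℝ) (hE₀ : 0 < E₀) (hA : 0 < A) :
    ∃ M > (0:ℝ), ∀ ε a : ℝ, 0 < ε → ε ≤ E₀ → 0 ≤ a → a ≤ A →
      ∀ u : ℝ → ℝ, ContDiff ℝ 2 u →
        (∀ x : ℝ, ε ^ 2 * deriv (deriv u) x + μ x * u x - (u x) ^ 3 + ε * a * f x = 0) →
        Filter.Tendsto u Filter.atTop (𝓝 0) →
        Filter.Tendsto u Filter.atBot (𝓝 0) →
        ∀ x : ℝ, |u x| ≤ M := by
  obtain ⟨Cμ, hCμ⟩ := h.μ_bdd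
  obtain ⟨Cf, hCf⟩ := h.f_bdd
  have hCμ0 : 0 ≤ Cμ := le_trans (abs_nonneg _) (hCμ 0)
  have hCf0 : 0 ≤ Cf := le_trans (abs_nonneg _) (hCf 0)
  set K := E₀ * A * Cf with hK
  have hK0 : 0 ≤ K := by positivity
  refine ⟨1 + Cμ + K, by positivity, ?_⟩
  intro ε a hε hεE ha haA u hu heq htop hbot x
  set M := 1 + Cμ + K with hM
  by_contra hx
  push_neg at hx
  -- u is small near ±∞
  have h1 : ∀ᶠ y in atTop, |u y| < 1 := by
    have := Metric.tendsto_nhds.mp htop 1 one_pos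
    simpa [Real.dist_eq] using this
  have h2 : ∀ᶠ y in atBot, |u y| < 1 := by
    have := Metric.tendsto_nhds.mp hbot 1 one_pos
    simpa [Real.dist_eq] using this
  obtain ⟨R₁, hR₁⟩ := eventually_atTop.mp h1
  obtain ⟨R₂, hR₂⟩ := eventually_atBot.mp h2
  set L : ℝ := min x R₂ with hL
  set R : ℝ := max x R₁ with hR
  have hLR : L ≤ R := le_trans (min_le_left _ _) (le_max_left _ _)
  have hxI : x ∈ Icc L R := ⟨min_le_left _ _, le_max_left _ _⟩
  -- |u| attains its max on [L,R]
  obtain ⟨c, hcI, hc⟩ := (isCompact_Icc (a := L) (b := R)).exists_isMaxOn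
    ⟨x, hxI⟩ ((continuous_abs.comp (hu.continuous)).continuousOn)
  have hcx : |u x| ≤ |u c| := hc hxI
  have hcM : M < |u c| := lt_of_lt_of_le hx hcx
  have hM1 : (1:ℝ) ≤ M := by simp only [hM]; linarith
  -- c is a global max of |u|
  have hglob : ∀ y, |u y| ≤ |u c| := by
    intro y
    by_cases hy : y ∈ Icc L R
    · exact hc hy
    · rcases not_and_or.mp hy with hy1 | hy2
      · push_neg at hy1
        have : y ≤ R₂ := le_of_lt (lt_of_lt_of_le hy1 (min_le_right _ _))
        linarith [hR₂ y this, hcM, hM1]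
      · push_neg at hy2
        have : R₁ ≤ y := le_of_lt (lt_of_le_of_lt (le_max_right _ _) hy2)
        linarith [hR₁ y this, hcM, hM1]
  -- bounds at c from the equation
  have hεa : ε * a ≤ E₀ * A := mul_le_mul hεE haA ha hE₀.le
  have hfa : |ε * a * f c| ≤ K := by
    rw [abs_mul, abs_of_nonneg (mul_nonneg hε.le ha)]
    calc ε * a * |f c| ≤ E₀ * A * Cf :=
          mul_le_mul hεa (hCf c) (abs_nonneg _) (by positivity)
      _ = K := rfl
  have hεK1 : ε * a * f c ≤ K := le_trans (le_abs_self _) hfa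
  have hεK2 : -K ≤ ε * a * f c := by
    have := neg_abs_le (ε * a * f c); linarith
  have hμle : μ c ≤ Cμ := le_trans (le_abs_self _) (hCμ c)
  have hμge : -Cμ ≤ μ c := by have := neg_abs_le (μ c); linarith [hCμ c]
  have heqc := heq c
  rcases le_or_gt 0 (u c) with hsgn | hsgn
  · -- positive max
    have huc : M < u c := by rwa [abs_of_nonneg hsgn] at hcM
    have upos : 0 < u c := lt_of_le_of_lt (by positivity) huc
    have hmaxu : ∀ y, u y ≤ u c := by
      intro y
      have := hglob y
      rw [abs_of_nonneg hsgn] at this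
      exact le_trans (le_abs_self _) this
    have hsec : deriv (deriv u) c ≤ 0 := secderiv_nonpos_of_max u hu c hmaxu
    have h3 : ε ^ 2 * deriv (deriv u) c ≤ 0 :=
      mul_nonpos_of_nonneg_of_nonpos (sq_nonneg ε) hsec
    have hμc : μ c * u c ≤ Cμ * u c := mul_le_mul_of_nonneg_right hμle hsgn
    have key : u c ^ 3 ≤ Cμ * u c + K := by linarith
    have h4 : 1 ≤ u c := by linarith
    have e1 : Cμ * u c + K ≤ (Cμ + K) * u c := by
      have := mul_le_mul_of_nonneg_left h4 hK0
      linarith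
    have e2 : (Cμ + K) * u c < M * u c :=
      mul_lt_mul_of_pos_right (by rw [hM]; linarith) upos
    have e3 : M * u c < u c * u c := mul_lt_mul_of_pos_right huc upos
    have e4 : u c * u c ≤ u c ^ 3 := by
      have := mul_le_mul_of_nonneg_left h4 (mul_nonneg upos.le upos.le)
      linarith
    linarith
  · -- negative min
    have huc : u c < -M := by
      rw [abs_of_neg hsgn] at hcM; linarith
    have hminu : ∀ y, u c ≤ u y := by
      intro y
      have := hglob y
      rw [abs_of_neg hsgn] at this
      linarith [neg_abs_le (u y)]
    have hmaxneg : ∀ y, (fun z => -u z) y ≤ (fun z => -u z) c := fun y => by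
      simpa using hminu y
    have hsec' : deriv (deriv (fun z => -u z)) c ≤ 0 :=
      secderiv_nonpos_of_max _ hu.neg c hmaxneg
    have hder : deriv (deriv (fun z => -u z)) c = -deriv (deriv u) c := by
      have hd1 : (deriv (fun z => -u z)) = fun z => -deriv u z := by
        funext z; exact deriv.neg
      rw [hd1]
      exact deriv.neg
    have hsec : 0 ≤ deriv (deriv u) c := by rw [hder] at hsec'; linarith
    have h3 : 0 ≤ ε ^ 2 * deriv (deriv u) c := mul_nonneg (sq_nonneg ε) hsec
    have hμc : Cμ * u c ≤ μ c * u c := mul_le_mul_of_nonpos_right hμle hsgn.le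
    have key : Cμ * u c - K ≤ u c ^ 3 := by linarith
    set w : ℝ := -u c with hw
    have hwM : M < w := by simp only [hw]; linarith
    have wpos : 0 < w := lt_of_le_of_lt (by positivity) hwM
    have keyw : w ^ 3 ≤ Cμ * w + K := by
      have huw : u c = -w := by simp [hw]
      rw [huw] at key
      linarith [key]
    have h4 : 1 ≤ w := by linarith
    have e1 : Cμ * w + K ≤ (Cμ + K) * w := by
      have := mul_le_mul_of_nonneg_left h4 hK0
      linarith
    have e2 : (Cμ + K) * w < M * w :=
      mul_lt_mul_of_pos_right (by rw [hM]; linarith) wpos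
    have e3 : M * w < w * w := mul_lt_mul_of_pos_right hwM wpos
    have e4 : w * w ≤ w ^ 3 := by
      have := mul_le_mul_of_nonneg_left h4 (mul_nonneg wpos.le wpos.le)
      linarith
    linarith
end

section
/- For every A > 0 there exist ε₀ > 0 and K > 0 such that: for all ε ∈ (0, ε₀] and a ∈ [0, A], every C² solution u of ε² u''(x) + μ(x) u(x) − u(x)³ + ε a f(x) = 0 on ℝ with u(x) → 0 as x → ±∞ satisfies |u(x)| ≤ K·( √(max(μ(x), 0)) + ε^{1/3} ) for all x ∈ ℝ. -/
open MeasureTheory Filter Topology Set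

private lemma sqrt_add_le' {a b : ℝ} (ha : 0 ≤ a) (hb : 0 ≤ b) :
    Real.sqrt (a + b) ≤ Real.sqrt a + Real.sqrt b := by
  have h1 : a + b ≤ (Real.sqrt a + Real.sqrt b) ^ 2 := by
    nlinarith [Real.sq_sqrt ha, Real.sq_sqrt hb, Real.sqrt_nonneg a, Real.sqrt_nonneg b,
      mul_nonneg (Real.sqrt_nonneg a) (Real.sqrt_nonneg b)]
  calc Real.sqrt (a + b) ≤ Real.sqrt ((Real.sqrt a + Real.sqrt b) ^ 2) := Real.sqrt_le_sqrt h1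
    _ = Real.sqrt a + Real.sqrt b := Real.sqrt_sq (by positivity)

private lemma bracket {F : ℝ → ℝ} (hF : Continuous F) {t : ℝ} (ht : 0 < F t)
    (hl : ∃ y, y ≤ t ∧ F y ≤ 0) (hr : ∃ y, t ≤ y ∧ F y ≤ 0) :
    ∃ α β : ℝ, α < t ∧ t < β ∧ F α ≤ 0 ∧ F β ≤ 0 ∧
      (∀ x, α < x → x < β → 0 < F x) ∧
      (∀ y, y ≤ t → F y ≤ 0 → y ≤ α) ∧ (∀ y, t ≤ y → F y ≤ 0 → β ≤ y) := by
  obtain ⟨l, hlt, hFl⟩ := hl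
  obtain ⟨r, hrt, hFr⟩ := hr
  set S : Set ℝ := Iic t ∩ {y | F y ≤ 0} with hS
  set T : Set ℝ := Ici t ∩ {y | F y ≤ 0} with hT
  have hSne : S.Nonempty := ⟨l, hlt, hFl⟩
  have hTne : T.Nonempty := ⟨r, hrt, hFr⟩
  have hSbdd : BddAbove S := ⟨t, fun y hy => hy.1⟩
  have hTbdd : BddBelow T := ⟨t, fun y hy => hy.1⟩
  have hSc : IsClosed S := isClosed_Iic.inter (isClosed_le hF continuous_const)
  have hTc : IsClosed T := isClosed_Ici.inter (isClosed_le hF continuous_const)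
  have hαS : sSup S ∈ S := hSc.csSup_mem hSne hSbdd
  have hβT : sInf T ∈ T := hTc.csInf_mem hTne hTbdd
  refine ⟨sSup S, sInf T, ?_, ?_, hαS.2, hβT.2, ?_, ?_, ?_⟩
  · rcases lt_or_eq_of_le (mem_Iic.mp hαS.1) with h | h
    · exact h
    · exact absurd (h ▸ hαS.2) (not_le.mpr ht)
  · rcases lt_or_eq_of_le (mem_Ici.mp hβT.1) with h | h
    · exact h
    · exact absurd (h ▸ hβT.2) (not_le.mpr ht)
  · intro x hx1 hx2
    by_contra hc
    push_neg at hc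
    rcases le_total x t with hxt | hxt
    · exact absurd (le_csSup hSbdd ⟨hxt, hc⟩) (not_le.mpr hx1)
    · exact absurd (csInf_le hTbdd ⟨hxt, hc⟩) (not_le.mpr hx2)
  · exact fun y hy hFy => le_csSup hSbdd ⟨hy, hFy⟩
  · exact fun y hy hFy => csInf_le hTbdd ⟨hy, hFy⟩

/-- `t ↦ t e^{-t/ν}` is bounded by `ν` for `t ≥ 0`. -/
private lemma texp_le {ν : ℝ} (hν : 0 < ν) {s : ℝ} (hs : 0 ≤ s) :
    s * Real.exp (-(s / ν)) ≤ ν := by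
  have h1 : s / ν ≤ Real.exp (s / ν) := by
    have := Real.add_one_le_exp (s / ν); linarith
  have h2 : s ≤ ν * Real.exp (s / ν) := by
    have h3 : ν * (s / ν) = s := by field_simp
    nlinarith [mul_le_mul_of_nonneg_left h1 hν.le]
  rw [Real.exp_neg, ← div_eq_mul_inv, div_le_iff₀ (Real.exp_pos _)]
  nlinarith [Real.exp_pos (s / ν)]

set_option maxHeartbeats 2000000 in
/-- Refined uniform bound: `|u(x)| ≤ K (√(max(μ(x), 0)) + ε^{1/3})` for solutions of the
Euler–Lagrange equation tending to `0` at `±∞`, for `ε` small and `a ∈ [0, A]`. -/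
theorem stmt12 (μ f : ℝ → ℝ) (ξ : ℝ) (h : Hyp μ f ξ) (A : ℝ) (hA : 0 < A) :
    ∃ ε₀ > (0:ℝ), ∃ K > (0:ℝ), ∀ ε a : ℝ, 0 < ε → ε ≤ ε₀ → 0 ≤ a → a ≤ A →
      ∀ u : ℝ → ℝ, ContDiff ℝ 2 u →
        (∀ x : ℝ, ε ^ 2 * deriv (deriv u) x + μ x * u x - (u x) ^ 3 + ε * a * f x = 0) →
        Filter.Tendsto u Filter.atTop (𝓝 0) →
        Filter.Tendsto u Filter.atBot (𝓝 0) →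
        ∀ x : ℝ, |u x| ≤ K * (Real.sqrt (max (μ x) 0) + ε ^ ((1:ℝ)/3)) := by
  classical
  obtain ⟨Mf, hMf⟩ := h.f_bdd
  have hMf0 : 0 ≤ Mf := (abs_nonneg _).trans (hMf 0)
  have hξ := h.ξ_pos
  have hμc : Continuous μ := h.μ_C1.continuous
  have hμ'c : Continuous (deriv μ) := h.μ_C1.continuous_deriv le_rfl
  have hμd : Differentiable ℝ μ := h.μ_C1.differentiable one_ne_zero
  -- bound on deriv μ on [-ξ, ξ]
  obtain ⟨L, hLbig⟩ := (isCompact_Icc (a := -ξ) (b := ξ)).exists_bound_of_continuousOn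
    hμ'c.continuousOn
  have hL0 : 0 ≤ L := (norm_nonneg _).trans (hLbig ξ ⟨by linarith, le_rfl⟩)
  -- μ ≤ 0 outside (-ξ, ξ)
  have hanti : StrictAntiOn μ (Ici 0) := by
    refine strictAntiOn_of_deriv_neg (convex_Ici 0) hμc.continuousOn ?_
    intro x hx
    rw [interior_Ici] at hx
    exact h.μ_deriv_neg x hx
  have hout0 : ∀ y : ℝ, ξ ≤ y → μ y ≤ 0 := by
    intro y hy
    rcases eq_or_lt_of_le hy with hy' | hy'
    · rw [← hy']; exact le_of_eq h.μ_ξ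
    · have := hanti (mem_Ici.mpr hξ.le) (mem_Ici.mpr (by linarith)) hy'
      rw [h.μ_ξ] at this; exact this.le
  have hout : ∀ x : ℝ, ξ ≤ |x| → μ x ≤ 0 := by
    intro x hx
    rcases le_total 0 x with hx0 | hx0
    · exact hout0 x (by rwa [abs_of_nonneg hx0] at hx)
    · rw [← h.μ_even x]; exact hout0 (-x) (by rwa [abs_of_nonpos hx0] at hx)
  set P : ℝ → ℝ := fun x => max (μ x) 0 with hPdef
  have hPc : Continuous P := hμc.max continuous_const
  have hP0 : ∀ x, 0 ≤ P x := fun x => le_max_right _ _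
  -- Lipschitz bound for P with constant L
  have hPlip : ∀ x y : ℝ, P y ≤ P x + L * |y - x| := by
    have hμlip : ∀ x ∈ Icc (-ξ) ξ, ∀ y ∈ Icc (-ξ) ξ, |μ y - μ x| ≤ L * |y - x| := by
      intro x hx y hy
      have := Convex.norm_image_sub_le_of_norm_deriv_le
        (fun z _ => hμd z) (fun z hz => hLbig z hz)
        (convex_Icc (-ξ) ξ) hx hy
      simpa [Real.norm_eq_abs] using this
    intro x y
    set cl : ℝ → ℝ := fun z => max (-ξ) (min z ξ) with hcl
    have hclmem : ∀ z, cl z ∈ Icc (-ξ) ξ :=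
      fun z => ⟨le_max_left _ _, max_le (by linarith) (min_le_right _ _)⟩
    have hPξ : P ξ = 0 := max_eq_right (le_of_eq h.μ_ξ)
    have hPnξ : P (-ξ) = 0 := max_eq_right (by rw [h.μ_even]; exact le_of_eq h.μ_ξ)
    have hcleq : ∀ z, P (cl z) = P z := by
      intro z
      rcases le_total z (-ξ) with hz | hz
      · have h1 : cl z = -ξ := by
          simp only [hcl]
          rw [min_eq_left (by linarith), max_eq_left hz]
        rw [h1, hPnξ]
        exact (max_eq_right (hout z (by rw [abs_of_nonpos (by linarith)]; linarith))).symm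
      rcases le_total ξ z with hz' | hz'
      · have h1 : cl z = ξ := by
          simp only [hcl]
          rw [min_eq_right hz', max_eq_right (by linarith)]
        rw [h1, hPξ]
        exact (max_eq_right (hout z (by rw [abs_of_nonneg (by linarith)]; linarith))).symm
      · have h1 : cl z = z := by
          simp only [hcl]
          rw [min_eq_left hz', max_eq_right hz]
        rw [h1]
    have hcllip : |cl y - cl x| ≤ |y - x| := by
      have h1 : |max (min y ξ) (-ξ) - max (min x ξ) (-ξ)| ≤ |min y ξ - min x ξ| :=
        abs_max_sub_max_le_abs _ _ _
      have h2 : |min y ξ - min x ξ| ≤ max |y - x| |ξ - ξ| := abs_min_sub_min_le_max _ _ _ _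
      have h3 : max |y - x| |ξ - ξ| = |y - x| := by
        rw [sub_self, abs_zero]; exact max_eq_left (abs_nonneg _)
      simp only [hcl]
      rw [max_comm (-ξ) (min y ξ), max_comm (-ξ) (min x ξ)]
      calc |max (min y ξ) (-ξ) - max (min x ξ) (-ξ)| ≤ |min y ξ - min x ξ| := h1
        _ ≤ |y - x| := h3 ▸ h2
    have h4 : |P (cl y) - P (cl x)| ≤ |μ (cl y) - μ (cl x)| := abs_max_sub_max_le_abs _ _ _
    have h5 : |μ (cl y) - μ (cl x)| ≤ L * |cl y - cl x| := hμlip _ (hclmem x) _ (hclmem y)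
    have h6 : L * |cl y - cl x| ≤ L * |y - x| := mul_le_mul_of_nonneg_left hcllip hL0
    have h7 : P (cl y) - P (cl x) ≤ L * |y - x| :=
      (le_abs_self _).trans (h4.trans (h5.trans h6))
    rw [hcleq x, hcleq y] at h7
    linarith
  -- constants
  set C : ℝ := 2 + 4 * A * Mf with hCdef
  have hC2 : 2 ≤ C := by nlinarith
  set D : ℝ := 4 * L + 2 * C with hDdef
  have hD0 : 0 < D := by linarith
  refine ⟨1, one_pos, 2 + Real.sqrt D, by positivity, ?_⟩
  intro ε a hε hε1 ha0 haA u hu hEq htop hbot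
  -- η = ε^{1/3}
  set η : ℝ := ε ^ ((1:ℝ)/3) with hηdef
  have hη : 0 < η := Real.rpow_pos_of_pos hε _
  have hη3 : η ^ 3 = ε := by
    rw [hηdef, ← Real.rpow_natCast (ε ^ ((1:ℝ)/3)) 3, ← Real.rpow_mul hε.le]
    norm_num
  set ν : ℝ := η ^ 2 with hνdef
  have hν0 : 0 < ν := by positivity
  -- derivatives of u
  have hud : Differentiable ℝ u := hu.differentiable (by norm_num)
  have hu2 : ContDiff ℝ ((1 : WithTop ℕ∞) + 1) u := by
    rw [(by norm_num : ((1 : WithTop ℕ∞) + 1) = 2)]; exact hu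
  have hu'd : Differentiable ℝ (deriv u) :=
    (contDiff_succ_iff_deriv.mp hu2).2.2.differentiable one_ne_zero
  set u' : ℝ → ℝ := deriv u with hu'def
  set u'' : ℝ → ℝ := deriv u' with hu''def
  have hDu : ∀ x, HasDerivAt u (u' x) x := fun x => (hud x).hasDerivAt
  have hDu' : ∀ x, HasDerivAt u' (u'' x) x := fun x => (hu'd x).hasDerivAt
  -- v = u², derivatives
  set v : ℝ → ℝ := fun x => u x ^ 2 with hvdef
  have hvc : Continuous v := (hud.continuous).pow 2
  have hv0 : ∀ x, 0 ≤ v x := fun x => sq_nonneg _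
  set v' : ℝ → ℝ := fun x => 2 * u x * u' x with hv'def
  have hDv : ∀ x, HasDerivAt v (v' x) x := by
    intro x
    have : HasDerivAt (fun y => u y ^ 2) _ x := (hDu x).pow 2
    simpa [hv'def, mul_comm, mul_assoc, mul_left_comm] using this
  set v'' : ℝ → ℝ := fun x => 2 * u' x * u' x + 2 * u x * u'' x with hv''def
  have hDv' : ∀ x, HasDerivAt v' (v'' x) x := by
    intro x
    have h1 : HasDerivAt (fun y => 2 * u y) (2 * u' x) x := (hDu x).const_mul 2
    exact h1.mul (hDu' x)
  -- the equation
  have heq2 : ∀ x, ε ^ 2 * u'' x = u x ^ 3 - μ x * u x - ε * a * f x := by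
    intro x; have := hEq x; linarith
  -- key differential inequality
  have hkey : ∀ x, 2 * P x + C * ν < v x → v x / ν ^ 2 ≤ v'' x := by
    intro x hx
    have hm : μ x ≤ P x := le_max_left _ _
    have hfb := hMf x
    have e1 : ν ^ 3 * u'' x = u x ^ 3 - μ x * u x - η ^ 3 * (a * f x) := by
      have h0 := heq2 x
      rw [← hη3] at h0
      linear_combination h0
    have hxv : 2 * P x + C * ν < u x ^ 2 := hx
    have hs2 : 2 * ν ≤ u x ^ 2 := by
      nlinarith [hP0 x, hν0, mul_nonneg (by linarith : (0:ℝ) ≤ C - 2) hν0.le]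
    have habs : η ≤ |u x| := by nlinarith [sq_abs (u x), abs_nonneg (u x)]
    have h4 : η * |u x| ≤ u x ^ 2 := by nlinarith [sq_abs (u x), abs_nonneg (u x)]
    have hfs : a * (f x * u x) ≤ A * (Mf * |u x|) := by
      have h1 : f x * u x ≤ |f x| * |u x| := by
        rw [← abs_mul]; exact le_abs_self _
      have h2 : |f x| * |u x| ≤ Mf * |u x| := mul_le_mul_of_nonneg_right hfb (abs_nonneg _)
      have h3 : a * (f x * u x) ≤ a * (Mf * |u x|) :=
        mul_le_mul_of_nonneg_left (h1.trans h2) ha0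
      have h5 : a * (Mf * |u x|) ≤ A * (Mf * |u x|) :=
        mul_le_mul_of_nonneg_right haA (by positivity)
      linarith
    have key1 : v'' x * (ν ^ 2 * ν)
        = 2 * (u' x * u' x) * ν ^ 3 + 2 * u x ^ 4 - 2 * μ x * u x ^ 2
          - 2 * η ^ 3 * (a * (f x * u x)) := by
      simp only [hv''def]
      linear_combination 2 * u x * e1
    have hx' : 2 * P x + (2 + 4 * A * Mf) * ν < u x ^ 2 := by
      have h8 : 2 * P x + C * ν < u x ^ 2 := hx
      rw [hCdef] at h8; exact h8
    have c2 : 2 * P x * u x ^ 2 ≤ (u x ^ 2 - (2 + 4 * A * Mf) * ν) * u x ^ 2 :=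
      mul_le_mul_of_nonneg_right (by linarith) (sq_nonneg _)
    have c1 : 2 * μ x * u x ^ 2 ≤ 2 * P x * u x ^ 2 := by nlinarith [sq_nonneg (u x)]
    have c3 : 2 * η ^ 3 * (a * (f x * u x)) ≤ 2 * η ^ 3 * (A * (Mf * |u x|)) :=
      mul_le_mul_of_nonneg_left hfs (by positivity)
    have c4 : 2 * η ^ 3 * (A * (Mf * |u x|)) ≤ 2 * A * Mf * ν * u x ^ 2 := by
      have h6 : 2 * η ^ 3 * (A * (Mf * |u x|)) = 2 * A * Mf * ν * (η * |u x|) := by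
        rw [hνdef]; ring
      rw [h6]
      exact mul_le_mul_of_nonneg_left h4 (by positivity)
    have hfinal : u x ^ 2 * ν ≤ v'' x * (ν ^ 2 * ν) := by
      rw [key1]
      nlinarith [mul_nonneg (mul_self_nonneg (u' x)) (by positivity : (0:ℝ) ≤ ν ^ 3),
        sq_nonneg (u x ^ 2), mul_nonneg hν0.le (sq_nonneg (u x)),
        mul_nonneg (mul_nonneg hA.le hMf0) (mul_nonneg hν0.le (sq_nonneg (u x)))]
    have hfinal2 : v x ≤ v'' x * ν ^ 2 := by
      have h9 : v x * ν ≤ v'' x * ν ^ 2 * ν := by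
        have hvx : v x = u x ^ 2 := rfl
        rw [hvx]
        calc u x ^ 2 * ν ≤ v'' x * (ν ^ 2 * ν) := hfinal
          _ = v'' x * ν ^ 2 * ν := by ring
      exact le_of_mul_le_mul_right h9 hν0
    exact (div_le_iff₀ (by positivity : (0:ℝ) < ν ^ 2)).mpr hfinal2
  -- v tends to 0 at ±∞
  have hvtop : Tendsto v atTop (𝓝 0) := by
    have := htop.pow 2
    simpa [hvdef] using this
  have hvbot : Tendsto v atBot (𝓝 0) := by
    have := hbot.pow 2
    simpa [hvdef] using this
  -- main pointwise bound
  intro t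
  have hgoal : |u t| = Real.sqrt (v t) := (Real.sqrt_sq_eq_abs (u t)).symm
  have hfin : v t ≤ 4 * P t + D * ν := by
    by_cases hcase : v t ≤ 2 * P t + C * ν
    · have : C * ν ≤ D * ν := mul_le_mul_of_nonneg_right (by linarith) hν0.le
      nlinarith [hP0 t]
    · push_neg at hcase
      set F : ℝ → ℝ := fun x => v x - (2 * P x + C * ν) with hFdef
      have hFc : Continuous F := hvc.sub ((continuous_const.mul hPc).add continuous_const)
      have hFt : 0 < F t := by simp only [hFdef]; linarith
      have hlF : ∃ y, y ≤ t ∧ F y ≤ 0 := by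
        obtain ⟨y, hy1, hy2⟩ :=
          ((hvbot.eventually_lt_const (by positivity : (0:ℝ) < C * ν)).and
            (eventually_le_atBot t)).exists
        exact ⟨y, hy2, by simp only [hFdef]; nlinarith [hP0 y]⟩
      have hrF : ∃ y, t ≤ y ∧ F y ≤ 0 := by
        obtain ⟨y, hy1, hy2⟩ :=
          ((hvtop.eventually_lt_const (by positivity : (0:ℝ) < C * ν)).and
            (eventually_ge_atTop t)).exists
        exact ⟨y, hy2, by simp only [hFdef]; nlinarith [hP0 y]⟩
      obtain ⟨α, β, hαt, htβ, hFα, hFβ, hmid, _, _⟩ := bracket hFc hFt hlF hrF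
      -- the barrier function
      set w : ℝ → ℝ := fun x => v α * Real.exp (-((x - α) / ν)) + v β * Real.exp ((x - β) / ν)
        with hwdef
      set w1 : ℝ → ℝ := fun x =>
        (v β * Real.exp ((x - β) / ν) - v α * Real.exp (-((x - α) / ν))) / ν with hw1def
      have hEm : ∀ x, HasDerivAt (fun y => Real.exp (-((y - α) / ν)))
          (Real.exp (-((x - α) / ν)) * (-(1 / ν))) x := by
        intro x
        exact (((((hasDerivAt_id x).sub_const α).div_const ν)).neg).exp
      have hEp : ∀ x, HasDerivAt (fun y => Real.exp ((y - β) / ν))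
          (Real.exp ((x - β) / ν) * (1 / ν)) x := by
        intro x
        exact ((((hasDerivAt_id x).sub_const β).div_const ν)).exp
      have hDw : ∀ x, HasDerivAt w (w1 x) x := by
        intro x
        have h1 := ((hEm x).const_mul (v α)).add ((hEp x).const_mul (v β))
        have h2 : v α * (Real.exp (-((x - α) / ν)) * (-(1 / ν)))
            + v β * (Real.exp ((x - β) / ν) * (1 / ν)) = w1 x := by
          simp only [hw1def]; ring
        rw [h2] at h1
        exact h1
      have hDw1 : ∀ x, HasDerivAt w1 (w x / ν ^ 2) x := by
        intro x
        have h1 := ((((hEp x).const_mul (v β)).sub ((hEm x).const_mul (v α))).div_const ν)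
        have h2 : (v β * (Real.exp ((x - β) / ν) * (1 / ν))
            - v α * (Real.exp (-((x - α) / ν)) * (-(1 / ν)))) / ν = w x / ν ^ 2 := by
          simp only [hwdef]; field_simp; ring
        rw [h2] at h1
        exact h1
      have hwc : Continuous w := by
        apply Continuous.add
        · exact continuous_const.mul (Real.continuous_exp.comp (by fun_prop))
        · exact continuous_const.mul (Real.continuous_exp.comp (by fun_prop))
      -- comparison: v t ≤ w t
      have hvw : v t ≤ w t := by
        by_contra hcon
        push_neg at hcon
        set φ : ℝ → ℝ := fun x => v x - w x with hφdef
        have hφc : Continuous φ := hvc.sub hwc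
        have hφt : 0 < φ t := by simp only [hφdef]; linarith
        have hφα : φ α ≤ 0 := by
          simp only [hφdef, hwdef]
          have : -((α - α) / ν) = 0 := by rw [sub_self]; simp
          rw [this, Real.exp_zero]
          nlinarith [hv0 β, Real.exp_pos ((α - β) / ν)]
        have hφβ : φ β ≤ 0 := by
          simp only [hφdef, hwdef]
          have : (β - β) / ν = 0 := by rw [sub_self]; simp
          rw [this, Real.exp_zero]
          nlinarith [hv0 α, Real.exp_pos (-((β - α) / ν))]
        obtain ⟨α₁, β₁, hα₁t, htβ₁, hφα₁, hφβ₁, hmid₁, hmax₁, hmin₁⟩ :=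
          bracket hφc hφt ⟨α, hαt.le, hφα⟩ ⟨β, htβ.le, hφβ⟩
        have hαα₁ : α ≤ α₁ := hmax₁ α hαt.le hφα
        have hβ₁β : β₁ ≤ β := hmin₁ β htβ.le hφβ
        have hd1 : deriv φ = fun x => v' x - w1 x :=
          funext fun x => ((hDv x).sub (hDw x)).deriv
        have hconv : ConvexOn ℝ (Icc α₁ β₁) φ := by
          apply convexOn_of_deriv2_nonneg (convex_Icc _ _) hφc.continuousOn
          · exact fun x _ => ((hDv x).sub (hDw x)).differentiableAt.differentiableWithinAt
          · rw [hd1]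
            exact fun x _ => ((hDv' x).sub (hDw1 x)).differentiableAt.differentiableWithinAt
          · intro x hx
            rw [interior_Icc] at hx
            have hφx : 0 < φ x := hmid₁ x hx.1 hx.2
            have hgt : 2 * P x + C * ν < v x := by
              have := hmid x (lt_of_le_of_lt hαα₁ hx.1) (lt_of_lt_of_le hx.2 hβ₁β)
              simp only [hFdef] at this; linarith
            have hkx := hkey x hgt
            have hit : deriv^[2] φ x = v'' x - w x / ν ^ 2 := by
              show deriv (deriv φ) x = _
              rw [hd1]
              exact ((hDv' x).sub (hDw1 x)).deriv
            rw [hit]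
            have hqd : (v x - w x) / ν ^ 2 = v x / ν ^ 2 - w x / ν ^ 2 := sub_div _ _ _
            have h9 : 0 ≤ (v x - w x) / ν ^ 2 := by
              apply div_nonneg _ (by positivity)
              simp only [hφdef] at hφx; linarith
            linarith
        have hseg : t ∈ segment ℝ α₁ β₁ := by
          rw [segment_eq_Icc (by linarith : α₁ ≤ β₁)]
          exact ⟨hα₁t.le, htβ₁.le⟩
        have hle := hconv.le_on_segment (left_mem_Icc.mpr (by linarith))
          (right_mem_Icc.mpr (by linarith)) hseg
        have : φ t ≤ 0 := hle.trans (max_le hφα₁ hφβ₁)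
        linarith
      -- final estimate
      have hEm1 : Real.exp (-((t - α) / ν)) ≤ 1 := by
        rw [← Real.exp_zero]
        apply Real.exp_le_exp.mpr
        have : 0 ≤ (t - α) / ν := div_nonneg (by linarith) hν0.le
        linarith
      have hEp1 : Real.exp ((t - β) / ν) ≤ 1 := by
        rw [← Real.exp_zero]
        apply Real.exp_le_exp.mpr
        exact div_nonpos_of_nonpos_of_nonneg (by linarith) hν0.le
      have hpb : v α ≤ 2 * P α + C * ν := by simp only [hFdef] at hFα; linarith
      have hqb : v β ≤ 2 * P β + C * ν := by simp only [hFdef] at hFβ; linarith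
      have hPα : P α ≤ P t + L * (t - α) := by
        have := hPlip t α
        rwa [abs_of_nonpos (by linarith), neg_sub] at this
      have hPβ : P β ≤ P t + L * (β - t) := by
        have := hPlip t β
        rwa [abs_of_nonneg (by linarith)] at this
      have hb1 : v α * Real.exp (-((t - α) / ν)) ≤ 2 * P t + C * ν + 2 * L * ν := by
        have hEpos : (0:ℝ) < Real.exp (-((t - α) / ν)) := Real.exp_pos _
        have h1 : v α ≤ 2 * P t + 2 * L * (t - α) + C * ν := by linarith
        have h2 : v α * Real.exp (-((t - α) / ν))
            ≤ (2 * P t + 2 * L * (t - α) + C * ν) * Real.exp (-((t - α) / ν)) :=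
          mul_le_mul_of_nonneg_right h1 hEpos.le
        have h3 : (2 * P t + C * ν) * Real.exp (-((t - α) / ν)) ≤ (2 * P t + C * ν) * 1 :=
          mul_le_mul_of_nonneg_left hEm1 (by positivity)
        have h5 : (t - α) * Real.exp (-((t - α) / ν)) ≤ ν := texp_le hν0 (by linarith)
        nlinarith
      have hb2 : v β * Real.exp ((t - β) / ν) ≤ 2 * P t + C * ν + 2 * L * ν := by
        have hrw : (t - β) / ν = -((β - t) / ν) := by ring
        rw [hrw]
        have hEpos : (0:ℝ) < Real.exp (-((β - t) / ν)) := Real.exp_pos _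
        have h1 : v β ≤ 2 * P t + 2 * L * (β - t) + C * ν := by linarith
        have h2 : v β * Real.exp (-((β - t) / ν))
            ≤ (2 * P t + 2 * L * (β - t) + C * ν) * Real.exp (-((β - t) / ν)) :=
          mul_le_mul_of_nonneg_right h1 hEpos.le
        have hEm1' : Real.exp (-((β - t) / ν)) ≤ 1 := by
          rw [← Real.exp_zero]
          apply Real.exp_le_exp.mpr
          have : 0 ≤ (β - t) / ν := div_nonneg (by linarith) hν0.le
          linarith
        have h3 : (2 * P t + C * ν) * Real.exp (-((β - t) / ν)) ≤ (2 * P t + C * ν) * 1 :=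
          mul_le_mul_of_nonneg_left hEm1' (by positivity)
        have h5 : (β - t) * Real.exp (-((β - t) / ν)) ≤ ν := texp_le hν0 (by linarith)
        nlinarith
      have hwt : w t = v α * Real.exp (-((t - α) / ν)) + v β * Real.exp ((t - β) / ν) := rfl
      rw [hDdef]
      calc v t ≤ w t := hvw
        _ ≤ (2 * P t + C * ν + 2 * L * ν) + (2 * P t + C * ν + 2 * L * ν) := by
            rw [hwt]; linarith
        _ = 4 * P t + (4 * L + 2 * C) * ν := by ring
  -- finish: take square roots
  rw [hgoal]
  have hsν : Real.sqrt ν = η := by rw [hνdef]; exact Real.sqrt_sq hη.le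
  have hs4 : Real.sqrt (4 * P t) = 2 * Real.sqrt (P t) := by
    rw [show (4:ℝ) * P t = 2 ^ 2 * P t by ring, Real.sqrt_mul (by positivity) (P t),
      Real.sqrt_sq (by norm_num : (0:ℝ) ≤ 2)]
  have hsD : Real.sqrt (D * ν) = Real.sqrt D * η := by
    rw [Real.sqrt_mul hD0.le, hsν]
  calc Real.sqrt (v t) ≤ Real.sqrt (4 * P t + D * ν) := Real.sqrt_le_sqrt hfin
    _ ≤ Real.sqrt (4 * P t) + Real.sqrt (D * ν) :=
        sqrt_add_le' (by nlinarith [hP0 t]) (by positivity)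
    _ = 2 * Real.sqrt (P t) + Real.sqrt D * η := by rw [hs4, hsD]
    _ ≤ (2 + Real.sqrt D) * (Real.sqrt (P t) + η) := by
        nlinarith [Real.sqrt_nonneg (P t), Real.sqrt_nonneg D, hη.le]
end

section
/- Let α < 0 and for each s ∈ ℝ let σ₊(s) denote the unique positive real root of 2y³ + s·y + α = 0. Then: σ₊ is differentiable with σ₊'(s) < 0 for all s ∈ ℝ; for all s > 0 one has 0 < σ₊(s) < |α|/s, and s·σ₊(s) → |α| as s → +∞; for all s < 0 one has σ₊(s) > √(|s|/2), and σ₊(s) − √(|s|/2) → 0 as s → −∞; moreover σ₊ is convex on [0, ∞). -/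
open Filter Topology Set

/-- Properties of the positive branch `σ₊` of roots of `2y³ + s y + α = 0` (`α < 0`):
it is differentiable and strictly decreasing, satisfies `0 < σ₊(s) < |α|/s` for `s > 0` with
`s σ₊(s) → |α|` at `+∞`, satisfies `σ₊(s) > √(|s|/2)` for `s < 0` with
`σ₊(s) - √(|s|/2) → 0` at `-∞`, and is convex on `[0, ∞)`. -/
theorem stmt14 (α : ℝ) (hα : α < 0) (σp : ℝ → ℝ)
    (hroot : ∀ s : ℝ, 0 < σp s ∧ 2 * (σp s) ^ 3 + s * σp s + α = 0)
    (huniq : ∀ s y : ℝ, 0 < y → 2 * y ^ 3 + s * y + α = 0 → y = σp s) :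
    Differentiable ℝ σp ∧ (∀ s : ℝ, deriv σp s < 0) ∧
    (∀ s : ℝ, 0 < s → σp s < |α| / s) ∧
    Filter.Tendsto (fun s => s * σp s) Filter.atTop (𝓝 |α|) ∧
    (∀ s : ℝ, s < 0 → Real.sqrt (|s| / 2) < σp s) ∧
    Filter.Tendsto (fun s => σp s - Real.sqrt (|s| / 2)) Filter.atBot (𝓝 0) ∧
    ConvexOn ℝ (Set.Ici (0:ℝ)) σp := by
  have hpos : ∀ s, 0 < σp s := fun s => (hroot s).1
  have heq : ∀ s, 2 * (σp s)^3 + s * σp s + α = 0 := fun s => (hroot s).2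
  -- strict antitonicity
  have hanti : StrictAnti σp := by
    intro s1 s2 h12
    by_contra hc
    push_neg at hc
    have h1 : (2*(σp s1)^3 + s1*σp s1 + α) * σp s2 = 0 := by rw [heq s1]; ring
    have h2 : (2*(σp s2)^3 + s2*σp s2 + α) * σp s1 = 0 := by rw [heq s2]; ring
    nlinarith [hpos s1, hpos s2, mul_pos (hpos s1) (hpos s2),
      mul_nonneg (mul_pos (hpos s1) (hpos s2)).le (sub_nonneg.2 hc),
      mul_nonneg (mul_nonneg (mul_pos (hpos s1) (hpos s2)).le (sub_nonneg.2 hc)) (add_pos (hpos s1) (hpos s2)).le]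
  -- the inverse function g
  set g : ℝ → ℝ := fun y => -α * y⁻¹ - 2*y^2 with hg
  have hginv : ∀ s, g (σp s) = s := by
    intro s
    have h := heq s
    have h0 := (hpos s).ne'
    simp only [hg]
    field_simp
    nlinarith [heq s]
  have hinvg : ∀ y : ℝ, 0 < y → σp (g y) = y := by
    intro y hy
    refine (huniq (g y) y hy ?_).symm
    simp only [hg]
    field_simp
    ring
  -- continuity
  have hcont : Continuous σp := by
    have hmono : StrictMono (fun s => (⟨σp (-s), hpos (-s)⟩ : Set.Ioi (0:ℝ))) := by
      intro a b hab
      exact Subtype.mk_lt_mk.2 (hanti (by linarith : -b < -a))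
    have hsurj : Function.Surjective (fun s => (⟨σp (-s), hpos (-s)⟩ : Set.Ioi (0:ℝ))) := by
      rintro ⟨y, hy⟩
      exact ⟨-(g y), by simp [hinvg y hy]⟩
    have hiso := (StrictMono.orderIsoOfSurjective _ hmono hsurj).continuous
    have h2 : Continuous (fun s => (σp (-s))) := by
      have := continuous_subtype_val.comp hiso
      exact this
    have : Continuous (fun s : ℝ => σp (-(-s))) := h2.comp continuous_neg
    simpa using this
  -- derivative
  have hgd : ∀ s : ℝ, α/(σp s)^2 - 4*σp s < 0 := by
    intro s
    have h1 : α/(σp s)^2 < 0 := div_neg_of_neg_of_pos hα (pow_pos (hpos s) 2)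
    nlinarith [hpos s]
  have hderivAt : ∀ s : ℝ, HasDerivAt σp (α/(σp s)^2 - 4*σp s)⁻¹ s := by
    intro s
    have hy := hpos s
    have hgder : HasDerivAt g (α/(σp s)^2 - 4*σp s) (σp s) := by
      have h1 := ((hasDerivAt_inv hy.ne').const_mul (-α)).sub ((hasDerivAt_pow 2 (σp s)).const_mul 2)
      convert h1 using 1
      case e'_9 =>
        rw [show (2:ℕ) - 1 = 1 from rfl]
        push_cast
        ring
      all_goals rfl
    exact HasDerivAt.of_local_left_inverse hcont.continuousAt hgder (hgd s).ne
      (Eventually.of_forall hginv)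
  have hdiff : Differentiable ℝ σp := fun s => (hderivAt s).differentiableAt
  have hderiv_eq : ∀ s, deriv σp s = (α/(σp s)^2 - 4*σp s)⁻¹ := fun s => (hderivAt s).deriv
  have hderiv_neg : ∀ s, deriv σp s < 0 := by
    intro s; rw [hderiv_eq s]; exact inv_lt_zero.2 (hgd s)
  refine ⟨hdiff, hderiv_neg, ?_, ?_, ?_, ?_, ?_⟩
  · -- bound for s > 0
    intro s hs
    rw [abs_of_neg hα, lt_div_iff₀ hs]
    nlinarith [heq s, hpos s, pow_pos (hpos s) 3]
  · -- tendsto at top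
    have hub : ∀ᶠ s in atTop, σp s ≤ -α / s := by
      filter_upwards [eventually_gt_atTop 0] with s hs
      rw [le_div_iff₀ hs]
      nlinarith [heq s, hpos s, pow_pos (hpos s) 3]
    have hlb : ∀ᶠ s in atTop, 0 ≤ σp s := Eventually.of_forall fun s => (hpos s).le
    have hto0 : Tendsto σp atTop (𝓝 0) :=
      tendsto_of_tendsto_of_tendsto_of_le_of_le' tendsto_const_nhds
        (tendsto_const_nhds.div_atTop tendsto_id) hlb hub
    have : Tendsto (fun s => -α - 2*(σp s)^3) atTop (𝓝 (-α - 2*0^3)) := by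
      exact (tendsto_const_nhds.sub (((hto0.pow 3).const_mul 2)))
    rw [abs_of_neg hα]
    have heqfun : ∀ s : ℝ, -α - 2*(σp s)^3 = s * σp s := by
      intro s; nlinarith [heq s]
    simpa [heqfun] using this
  · -- bound for s < 0
    intro s hs
    rw [abs_of_neg hs]
    rw [show -s/2 = -s/2 from rfl]
    have h2 : -s/2 < (σp s)^2 := by nlinarith [heq s, hpos s]
    calc Real.sqrt (-s/2) < Real.sqrt ((σp s)^2) := by
          exact Real.sqrt_lt_sqrt (by linarith) h2
      _ = σp s := Real.sqrt_sq (hpos s).le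
  · -- tendsto at bot
    have hub : ∀ᶠ s in atBot, σp s - Real.sqrt (|s|/2) ≤ -α / (-s) := by
      filter_upwards [eventually_lt_atBot 0] with s hs
      rw [le_div_iff₀ (by linarith : (0:ℝ) < -s)]
      set t := Real.sqrt (|s|/2) with ht
      have ht0 : 0 ≤ t := Real.sqrt_nonneg _
      have ht2 : t^2 = -s/2 := by
        rw [ht, Real.sq_sqrt (by rw [abs_of_neg hs]; linarith : (0:ℝ) ≤ |s|/2), abs_of_neg hs]
      have hlt : t < σp s := by
        have h2 : -s/2 < (σp s)^2 := by nlinarith [heq s, hpos s]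
        calc t = Real.sqrt (-s/2) := by rw [ht, abs_of_neg hs]
          _ < Real.sqrt ((σp s)^2) := Real.sqrt_lt_sqrt (by linarith) h2
          _ = σp s := Real.sqrt_sq (hpos s).le
      nlinarith [heq s, hpos s, mul_nonneg (sub_nonneg.2 hlt.le) ht0,
        mul_nonneg (mul_nonneg (sub_nonneg.2 hlt.le) ht0) ht0,
        sq_nonneg (σp s - t), sq_nonneg (σp s + t)]
    have hlb : ∀ᶠ s in atBot, 0 ≤ σp s - Real.sqrt (|s|/2) := by
      filter_upwards [eventually_lt_atBot 0] with s hs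
      have h2 : -s/2 < (σp s)^2 := by nlinarith [heq s, hpos s]
      have : Real.sqrt (|s|/2) < σp s := by
        rw [abs_of_neg hs]
        calc Real.sqrt (-s/2) < Real.sqrt ((σp s)^2) := Real.sqrt_lt_sqrt (by linarith) h2
          _ = σp s := Real.sqrt_sq (hpos s).le
      linarith
    have hto : Tendsto (fun s : ℝ => -α / (-s)) atBot (𝓝 0) := by
      have h1 : Tendsto (fun s : ℝ => -s) atBot atTop := tendsto_neg_atBot_atTop
      exact tendsto_const_nhds.div_atTop h1
    exact tendsto_of_tendsto_of_tendsto_of_le_of_le' tendsto_const_nhds hto hlb hub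
  · -- convexity
    apply MonotoneOn.convexOn_of_deriv (convex_Ici 0) hcont.continuousOn hdiff.differentiableOn
    rw [interior_Ici]
    intro s1 hs1 s2 hs2 h12
    rw [hderiv_eq s1, hderiv_eq s2]
    set y1 := σp s1; set y2 := σp s2
    have hy1 : 0 < y1 := hpos s1
    have hy2 : 0 < y2 := hpos s2
    have h21 : y2 ≤ y1 := hanti.antitone h12
    have hcube : 2*y1^3 ≤ -α := by
      have := heq s1
      nlinarith [mul_pos (show (0:ℝ) < s1 from hs1) hy1]
    have hrw1 : (α/y1^2 - 4*y1)⁻¹ = -(y1^2/(4*y1^3 - α)) := by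
      rw [eq_comm, neg_eq_iff_eq_neg, ← inv_neg]
      field_simp
      rw [← div_neg, neg_sub]
    have hrw2 : (α/y2^2 - 4*y2)⁻¹ = -(y2^2/(4*y2^3 - α)) := by
      rw [eq_comm, neg_eq_iff_eq_neg, ← inv_neg]
      field_simp
      rw [← div_neg, neg_sub]
    rw [hrw1, hrw2, neg_le_neg_iff]
    have hd1 : 0 < 4*y1^3 - α := by nlinarith
    have hd2 : 0 < 4*y2^3 - α := by nlinarith
    rw [div_le_div_iff₀ hd2 hd1]
    have hc : 0 ≤ -α - 2*y1^3 := by linarith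
    have hd : 0 ≤ y1 - y2 := sub_nonneg.2 h21
    nlinarith [mul_nonneg (mul_nonneg hc hd) (add_pos hy1 hy2).le,
      mul_nonneg (mul_nonneg (mul_pos hy1 hy1).le (sq_nonneg (y1-y2))) (by positivity : (0:ℝ) ≤ y1 + 2*y2)]
end
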